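/- Let ρ > 0 and 0 < h₁ < h₂. Define β₁ = √(1+ρh₁)·(√(1+ρh₁) − 1)/(ρh₁) and β₂ = √(1+ρh₂)·(√(1+ρh₂) − 1)/(ρh₂). Then β₁ ≤ β₂. -/
import Mathlib

lemma aux_key (x : ℝ) (hx : 0 < x) :
    Real.sqrt (1 + x) * (Real.sqrt (1 + x) - 1) / x =
      Real.sqrt (1 + x) / (Real.sqrt (1 + x) + 1) := by
  set s := Real.sqrt (1 + x) with hs
  have hs1 : 1 < s := by
    nlinarith [Real.sq_sqrt (show (0:ℝ) ≤ 1 + x by linarith), Real.sqrt_nonneg (1 + x), hs]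
  have hsq : s ^ 2 = 1 + x := Real.sq_sqrt (by linarith)
  have hxeq : x = (s - 1) * (s + 1) := by ring_nf; nlinarith [hsq]
  rw [hxeq]
  rw [div_eq_div_iff (by nlinarith) (by nlinarith)]
  ring

theorem stmt_7 (ρ h₁ h₂ : ℝ) (hρ : 0 < ρ) (h1 : 0 < h₁) (h12 : h₁ < h₂) :
    Real.sqrt (1 + ρ * h₁) * (Real.sqrt (1 + ρ * h₁) - 1) / (ρ * h₁) ≤
      Real.sqrt (1 + ρ * h₂) * (Real.sqrt (1 + ρ * h₂) - 1) / (ρ * h₂) := by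
  have hx1 : 0 < ρ * h₁ := by positivity
  have hx2 : 0 < ρ * h₂ := by nlinarith
  rw [aux_key _ hx1, aux_key _ hx2]
  set s₁ := Real.sqrt (1 + ρ * h₁)
  set s₂ := Real.sqrt (1 + ρ * h₂)
  have hp1 : 0 ≤ s₁ := Real.sqrt_nonneg _
  have hp2 : 0 ≤ s₂ := Real.sqrt_nonneg _
  have hle : s₁ ≤ s₂ := Real.sqrt_le_sqrt (by nlinarith)
  rw [div_le_div_iff₀ (by linarith) (by linarith)]
  nlinarith
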